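/- Proposition 1 (the δISS condition implies the ISS condition): fix λ̌ ≥ 1, matrices W_z, W_f, W_r ∈ ℝ^{n_x×n_u}, U_z, U_f, U_r ∈ ℝ^{n_x×n_x} and vectors b_z, b_f, b_r ∈ ℝ^{n_x}, and set σ̌_z = σ(‖[W_z λ̌U_z b_z]‖_∞), σ̌_f = σ(‖[W_f λ̌U_f b_f]‖_∞), φ̌_r = tanh(‖[W_r λ̌U_r b_r]‖_∞), σ̄_f = σ(‖[W_f U_f b_f]‖_∞). If ‖U_r‖_∞ ( (1/4) λ̌ ‖U_f‖_∞ + σ̌_f ) < 1 − (1/4) ((λ̌ + φ̌_r)/(1 − σ̌_z)) ‖U_z‖_∞, then ‖U_r‖_∞ · σ̄_f < 1. -/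

import Mathlib

open Real

/-- The sigmoid activation function. -/
noncomputable def sigmoid (s : ℝ) : ℝ := 1 / (1 + Real.exp (-s))

/-- Induced infinity norm of a matrix (maximum absolute row sum). -/
noncomputable def matNorm {n m : ℕ} (A : Matrix (Fin n) (Fin m) ℝ) : ℝ :=
  ⨆ i, ∑ j, |A i j|

/-- Infinity norm of the horizontal concatenation `[A B c]`. -/
noncomputable def catNorm {n m p : ℕ} (A : Matrix (Fin n) (Fin m) ℝ)
    (B : Matrix (Fin n) (Fin p) ℝ) (c : Fin n → ℝ) : ℝ :=
  ⨆ i, (∑ j, |A i j| + ∑ j, |B i j| + |c i|)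

lemma sigmoid_pos (s : ℝ) : 0 < _root_.sigmoid s := by
  unfold _root_.sigmoid
  positivity

lemma _root_.sigmoid_lt_one (s : ℝ) : _root_.sigmoid s < 1 := by
  unfold _root_.sigmoid
  rw [div_lt_one (by positivity)]
  linarith [Real.exp_pos (-s)]

lemma sigmoid_mono {s t : ℝ} (h : s ≤ t) : _root_.sigmoid s ≤ _root_.sigmoid t := by
  unfold _root_.sigmoid
  apply one_div_le_one_div_of_le (by positivity)
  have := Real.exp_le_exp.2 (neg_le_neg h)
  linarith

lemma matNorm_nonneg {n m : ℕ} (A : Matrix (Fin n) (Fin m) ℝ) : 0 ≤ matNorm A :=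
  Real.iSup_nonneg fun i => Finset.sum_nonneg fun j _ => abs_nonneg _

lemma catNorm_nonneg {n m p : ℕ} (A : Matrix (Fin n) (Fin m) ℝ)
    (B : Matrix (Fin n) (Fin p) ℝ) (c : Fin n → ℝ) : 0 ≤ catNorm A B c :=
  Real.iSup_nonneg fun i => by positivity

lemma catNorm_le_catNorm_smul {n m p : ℕ} (A : Matrix (Fin n) (Fin m) ℝ)
    (B : Matrix (Fin n) (Fin p) ℝ) (c : Fin n → ℝ) {lam : ℝ} (hlam : 1 ≤ lam)
    (hn : 0 < n) :
    catNorm A B c ≤ catNorm A (lam • B) c := by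
  haveI : Nonempty (Fin n) := ⟨⟨0, hn⟩⟩
  apply ciSup_le
  intro i
  apply le_ciSup_of_le (Set.Finite.bddAbove (Set.finite_range _)) i
  have hB : ∑ j, |B i j| ≤ ∑ j, |(lam • B) i j| := by
    apply Finset.sum_le_sum
    intro j _
    have : |(lam • B) i j| = lam * |B i j| := by
      show |lam * B i j| = _
      rw [abs_mul, abs_of_nonneg (by linarith : (0:ℝ) ≤ lam)]
    rw [this]
    nlinarith [abs_nonneg (B i j)]
  linarith

/-- **Proposition 1: the δISS condition implies the ISS condition.** -/
theorem deltaISS_condition_implies_ISS_condition {nu nx : ℕ}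
    (Wz Wf Wr : Matrix (Fin nx) (Fin nu) ℝ)
    (Uz Uf Ur : Matrix (Fin nx) (Fin nx) ℝ)
    (bz bf br : Fin nx → ℝ)
    (lam : ℝ) (hlam : 1 ≤ lam)
    (hcond : matNorm Ur * ((1 / 4) * lam * matNorm Uf + _root_.sigmoid (catNorm Wf (lam • Uf) bf)) <
      1 - (1 / 4) * ((lam + Real.tanh (catNorm Wr (lam • Ur) br)) /
        (1 - _root_.sigmoid (catNorm Wz (lam • Uz) bz))) * matNorm Uz) :
    matNorm Ur * _root_.sigmoid (catNorm Wf Uf bf) < 1 := by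
  rcases Nat.eq_zero_or_pos nx with h0 | hn
  · subst h0
    have : matNorm Ur = 0 := by
      unfold matNorm
      rw [iSup_of_empty']
      exact Real.sSup_empty
    rw [this, zero_mul]; norm_num
  · have hUr := matNorm_nonneg Ur
    have hUf := matNorm_nonneg Uf
    have hUz := matNorm_nonneg Uz
    have htanh : 0 ≤ Real.tanh (catNorm Wr (lam • Ur) br) := by
      rw [Real.tanh_eq_sinh_div_cosh]
      exact div_nonneg (Real.sinh_nonneg_iff.2 (catNorm_nonneg _ _ _)) (Real.cosh_pos _).le
    have hsz := _root_.sigmoid_lt_one (catNorm Wz (lam • Uz) bz)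
    have hrhs : 1 - (1 / 4) * ((lam + Real.tanh (catNorm Wr (lam • Ur) br)) /
        (1 - _root_.sigmoid (catNorm Wz (lam • Uz) bz))) * matNorm Uz ≤ 1 := by
      have : 0 ≤ (1 / 4) * ((lam + Real.tanh (catNorm Wr (lam • Ur) br)) /
          (1 - _root_.sigmoid (catNorm Wz (lam • Uz) bz))) * matNorm Uz := by
        apply mul_nonneg (mul_nonneg (by norm_num) _) hUz
        exact div_nonneg (by linarith) (by linarith)
      linarith
    have hstep : matNorm Ur * _root_.sigmoid (catNorm Wf Uf bf) ≤
        matNorm Ur * ((1 / 4) * lam * matNorm Uf + _root_.sigmoid (catNorm Wf (lam • Uf) bf)) := by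
      apply mul_le_mul_of_nonneg_left _ hUr
      have h1 : _root_.sigmoid (catNorm Wf Uf bf) ≤ _root_.sigmoid (catNorm Wf (lam • Uf) bf) :=
        _root_.sigmoid_mono (catNorm_le_catNorm_smul _ _ _ hlam hn)
      nlinarith
    linarith
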